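/- A partial linear space is a UMP if and only if it is a tree of QIMPes. -/

import Mathlib

open scoped Classical
noncomputable section

/-! ### Lattice-theoretic preliminaries -/

/-- A tight embedding between bounded lattices: a cover-preserving lattice
homomorphism sending bottom to bottom. -/
def IsTightEmbedding {L L' : Type*} [Lattice L] [BoundedOrder L] [Lattice L'] [BoundedOrder L']
    (f : L → L') : Prop :=
  (∀ a b : L, f (a ⊔ b) = f a ⊔ f b) ∧ (∀ a b : L, f (a ⊓ b) = f a ⊓ f b) ∧
    f ⊥ = ⊥ ∧ ∀ a b : L, a ⋖ b → f a ⋖ f b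

/-- `Part(n)` is formalized as `Setoid (Fin n)`, the lattice of partitions of an
`n`-element set ordered by refinement. -/
def TightlyPartitionEmbeddable (L : Type*) [Lattice L] [BoundedOrder L] : Prop :=
  ∃ (n : ℕ) (f : L → Setoid (Fin n)), IsTightEmbedding f

/-- 2-distributivity. -/
def TwoDistrib (L : Type*) [Lattice L] : Prop :=
  ∀ a b c d : L, a ⊓ (b ⊔ c ⊔ d) = (a ⊓ (b ⊔ c)) ⊔ (a ⊓ (b ⊔ d)) ⊔ (a ⊓ (c ⊔ d))

/-- `L` has a cover-preserving sublattice isomorphic to `M₄`: six elements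
`b, t, a₁,…,a₄` with `b ⋖ aᵢ ⋖ t` (covers in `L`), `aᵢ ⊓ aⱼ = b`, `aᵢ ⊔ aⱼ = t`. -/
def HasCoverPreservingM4 (L : Type*) [Lattice L] : Prop :=
  ∃ (b t : L) (a : Fin 4 → L), Function.Injective a ∧
    (∀ i, b ⋖ a i) ∧ (∀ i, a i ⋖ t) ∧
    (∀ i j, i ≠ j → a i ⊓ a j = b) ∧ ∀ i j, i ≠ j → a i ⊔ a j = t

/-- Thin: 2-distributive and without cover-preserving `M₄`. -/
def IsThin (L : Type*) [Lattice L] : Prop := TwoDistrib L ∧ ¬ HasCoverPreservingM4 L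

/-- Height `d(L)` of a finite lattice: one less than the largest cardinality of a chain. -/
def latHeight (L : Type*) [Lattice L] [Fintype L] : ℕ :=
  (((Finset.univ : Finset (Finset L)).filter fun c : Finset L => IsChain (· ≤ ·) (c : Set L)).sup
    Finset.card) - 1

/-- The set `J(L)` of (nonzero) join-irreducible elements of a finite lattice. -/
def JFinset (L : Type*) [Lattice L] [Fintype L] : Finset L :=
  Finset.univ.filter fun p => SupIrred p

/-- `J(a) = {p ∈ J(L) : p ≤ a}`. -/
def Jle {L : Type*} [Lattice L] [Fintype L] (a : L) : Finset L :=
  Finset.univ.filter fun p => SupIrred p ∧ p ≤ a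

/-! ### Lattice congruences -/

/-- A congruence of a lattice. -/
structure LatCon (N : Type*) [Lattice N] where
  r : N → N → Prop
  refl : ∀ a, r a a
  symm : ∀ {a b}, r a b → r b a
  trans : ∀ {a b c}, r a b → r b c → r a c
  sup_comp : ∀ {a b c d}, r a b → r c d → r (a ⊔ c) (b ⊔ d)
  inf_comp : ∀ {a b c d}, r a b → r c d → r (a ⊓ c) (b ⊓ d)

/-- Containment of congruences. -/
def LatCon.le {N : Type*} [Lattice N] (c d : LatCon N) : Prop := ∀ a b, c.r a b → d.r a b

/-- A maximal (proper) congruence: a coatom of the congruence lattice. -/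
def LatCon.IsMaximal {N : Type*} [Lattice N] (c : LatCon N) : Prop :=
  (∃ a b, ¬ c.r a b) ∧ ∀ d : LatCon N, c.le d → d.le c ∨ ∀ a b, d.r a b

/-! ### Partial linear spaces -/

/-- A partial linear space with 3-element lines: any two distinct lines meet in
at most one point. -/
structure PLS (α : Type*) where
  J : Finset α
  Λ : Finset (Finset α)
  line_sub : ∀ ℓ ∈ Λ, ℓ ⊆ J
  line_card : ∀ ℓ ∈ Λ, ℓ.card = 3
  line_inter : ∀ ℓ ∈ Λ, ∀ ℓ' ∈ Λ, ℓ ≠ ℓ' → (ℓ ∩ ℓ').card ≤ 1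

/-- PLS-rank `rk(J,Λ) = |J| - |Λ|`. -/
def PLS.rk {α : Type*} (S : PLS α) : ℤ := (S.J.card : ℤ) - (S.Λ.card : ℤ)

/-- A path `[p₀,…,p_{n-1}]` together with its lines `ℓᵢ = [pᵢ,pᵢ₊₁]` (`i+1 < n`):
the lines exist, are distinct, and consecutive lines are the only intersecting ones. -/
structure PLSPath (α : Type*) where
  n : ℕ
  two_le : 2 ≤ n
  p : ℕ → α
  line : ℕ → Finset α
  p_mem_left : ∀ i, i + 1 < n → p i ∈ line i
  p_mem_right : ∀ i, i + 1 < n → p (i + 1) ∈ line i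
  p_ne : ∀ i, i + 1 < n → p i ≠ p (i + 1)
  lines_ne : ∀ i j, i < j → j + 1 < n → line i ≠ line j
  lines_inter_iff : ∀ i j, i < j → j + 1 < n → ((line i ∩ line j).Nonempty ↔ j = i + 1)

namespace PLSPath
variable {α : Type*}

/-- The underlying point set `P*` of a path. -/
def ptSet (P : PLSPath α) : Finset α := (Finset.range (P.n - 1)).biUnion P.line

/-- First point of a path. -/
def first (P : PLSPath α) : α := P.p 0

/-- Last point of a path. -/
def last (P : PLSPath α) : α := P.p (P.n - 1)

/-- The set of lines of a path. -/
def lineSet (P : PLSPath α) : Finset (Finset α) := (Finset.range (P.n - 1)).image P.line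

/-- The path lies in the line set `Λ`. -/
def In (P : PLSPath α) (Λ : Finset (Finset α)) : Prop := ∀ i, i + 1 < P.n → P.line i ∈ Λ

end PLSPath

/-- A cycle `(p₀,…,p_{n-1})`: a path whose closing line `[p_{n-1},p₀]` exists and
contains a point not on any path line. -/
structure PLSCycle (α : Type*) extends PLSPath α where
  closing : Finset α
  closing_last : p (n - 1) ∈ closing
  closing_first : p 0 ∈ closing
  closing_new : ∃ q ∈ closing, ∀ i, i + 1 < n → q ∉ line i

namespace PLSCycle
variable {α : Type*}

/-- The cycle lies in the line set `Λ`. -/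
def In (C : PLSCycle α) (Λ : Finset (Finset α)) : Prop :=
  C.toPLSPath.In Λ ∧ C.closing ∈ Λ

/-- The `i`-th `C`-line (for `i < n`; the last one is the closing line). -/
def cline (C : PLSCycle α) (i : ℕ) : Finset α :=
  if i + 1 < C.n then C.line i else C.closing

/-- The underlying point set `C*` of a cycle. -/
def cptSet (C : PLSCycle α) : Finset α := (Finset.range C.n).biUnion C.cline

/-- The set `Λ*` of `C`-lines of a cycle. -/
def clineSet (C : PLSCycle α) : Finset (Finset α) := (Finset.range C.n).image C.cline

/-- `q` is the `C`-midpoint of the `i`-th `C`-line. -/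
def IsMidpoint (C : PLSCycle α) (i : ℕ) (q : α) : Prop :=
  q ∈ C.cline i ∧ q ≠ C.p i ∧ q ≠ C.p ((i + 1) % C.n)

/-- `q` is a `C`-midpoint (of some `C`-line). -/
def IsMidpointPt (C : PLSCycle α) (q : α) : Prop := ∃ i < C.n, C.IsMidpoint i q

/-- The set of `C`-midpoints. -/
def midSet (C : PLSCycle α) : Finset α := C.cptSet.filter fun q => C.IsMidpointPt q

end PLSCycle

/-- Acyclic PLS: it has no cycle. -/
def PLS.Acyclic {α : Type*} (S : PLS α) : Prop := ∀ C : PLSCycle α, ¬ C.In S.Λ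

/-- QIMP: each line contains a quasi-isolated point. -/
def PLS.IsQIMP {α : Type*} (S : PLS α) : Prop :=
  ∀ ℓ ∈ S.Λ, ∃ q ∈ ℓ, ∀ ℓ' ∈ S.Λ, ℓ' ≠ ℓ → q ∉ ℓ'

/-- UMP: any line that occurs as a `C`-line has a unique midpoint, independent of
the cycle. -/
def PLS.IsUMP {α : Type*} (S : PLS α) : Prop :=
  ∀ C C' : PLSCycle α, C.In S.Λ → C'.In S.Λ → ∀ i j, i < C.n → j < C'.n →
    C.cline i = C'.cline j →
    ∀ q q', C.IsMidpoint i q → C'.IsMidpoint j q' → q = q'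

/-- `(J,Λ)` is a tree of the PLSes `F 0, …, F (t-1)`. -/
def PLS.IsTreeOf {α : Type*} (S : PLS α) (t : ℕ) (F : ℕ → PLS α) : Prop :=
  S.J = (Finset.range t).biUnion (fun i => (F i).J) ∧
  S.Λ = (Finset.range t).biUnion (fun i => (F i).Λ) ∧
  ∀ i, 0 < i → i < t → ∃ x, (F i).J ∩ (Finset.range i).biUnion (fun j => (F j).J) = {x}

/-- Sparse PLS: a testifying ordering of the lines exists. -/
def PLS.Sparse {α : Type*} (S : PLS α) : Prop :=
  ∃ ℓ : ℕ → Finset α, (∀ i, i < S.Λ.card → ℓ i ∈ S.Λ) ∧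
    (∀ i j, i < S.Λ.card → j < S.Λ.card → i ≠ j → ℓ i ≠ ℓ j) ∧
    ∀ i, i + 1 < S.Λ.card → ¬ ℓ (i + 1) ⊆ (Finset.range (i + 1)).biUnion ℓ

/-- Small girth: every cycle consists of three or four lines. -/
def PLS.SmallGirth {α : Type*} (S : PLS α) : Prop :=
  ∀ C : PLSCycle α, C.In S.Λ → C.n = 3 ∨ C.n = 4

/-- Type 1 midpoint-link of the cycle `C`: a path from a `C`-midpoint to a
`C`-junction meeting `C*` only in its endpoints. -/
def IsType1Link {α : Type*} (C : PLSCycle α) (P : PLSPath α) : Prop :=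
  C.IsMidpointPt P.first ∧ (∃ j < C.n, P.last = C.p j) ∧
    P.ptSet ∩ C.cptSet = {P.first, P.last}

/-- Type 2 midpoint-link of the cycle `C`: a path between two `C`-midpoints meeting
`C*` only in its endpoints. -/
def IsType2Link {α : Type*} (C : PLSCycle α) (P : PLSPath α) : Prop :=
  C.IsMidpointPt P.first ∧ C.IsMidpointPt P.last ∧ P.first ≠ P.last ∧
    P.ptSet ∩ C.cptSet = {P.first, P.last}

/-- Benign type 1 link: the midpoint and junction sit on a common `C`-line. -/
def Benign1 {α : Type*} (C : PLSCycle α) (P : PLSPath α) : Prop :=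
  ∃ i < C.n, P.first ∈ C.cline i ∧ P.last ∈ C.cline i

/-- Benign type 2 link: the two midpoints sit on intersecting `C`-lines. -/
def Benign2 {α : Type*} (C : PLSCycle α) (P : PLSPath α) : Prop :=
  ∃ i, i < C.n ∧ ∃ j, j < C.n ∧ C.IsMidpoint i P.first ∧ C.IsMidpoint j P.last ∧
    (C.cline i ∩ C.cline j).Nonempty

/-- A benign midpoint-link (of either type). -/
def BenignLink {α : Type*} (C : PLSCycle α) (P : PLSPath α) : Prop :=
  (IsType1Link C P ∧ Benign1 C P) ∨ (IsType2Link C P ∧ Benign2 C P)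

/-- BMPL: every midpoint-link of every cycle is benign. -/
def PLS.IsBMPL {α : Type*} (S : PLS α) : Prop :=
  ∀ C : PLSCycle α, C.In S.Λ → ∀ P : PLSPath α, P.In S.Λ →
    (IsType1Link C P → Benign1 C P) ∧ (IsType2Link C P → Benign2 C P)

/-- All midpoint-links are of type 1, i.e. there are no type 2 midpoint-links. -/
def PLS.OnlyType1Links {α : Type*} (S : PLS α) : Prop :=
  ∀ C : PLSCycle α, C.In S.Λ → ∀ P : PLSPath α, P.In S.Λ → ¬ IsType2Link C P

/-- `S'` arises from `S` by adding the path `P`. -/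
def AddsOnePath {α : Type*} (S' S : PLS α) (P : PLSPath α) : Prop :=
  P.In S'.Λ ∧ S'.J = S.J ∪ P.ptSet ∧ S.J ∩ P.ptSet = {P.first, P.last} ∧
    (∀ i, i + 1 < P.n → P.line i ∉ S.Λ) ∧ S'.Λ = S.Λ ∪ P.lineSet

/-- `S'` arises from `S` by adding a benign midpoint-link. -/
def AddsBenignLink {α : Type*} (S' S : PLS α) : Prop :=
  ∃ (P : PLSPath α) (C : PLSCycle α), C.In S.Λ ∧ AddsOnePath S' S P ∧ BenignLink C P

/-- `S'` arises from `S` by adding a benign midpoint-link of type 1. -/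
def AddsBenignLink1 {α : Type*} (S' S : PLS α) : Prop :=
  ∃ (P : PLSPath α) (C : PLSCycle α), C.In S.Λ ∧ AddsOnePath S' S P ∧
    IsType1Link C P ∧ Benign1 C P

/-- Augmented UMP: obtained from a UMP by iteratively adding benign midpoint-links. -/
def PLS.IsAugmentedUMP {α : Type*} (S : PLS α) : Prop :=
  ∃ S₀ : PLS α, S₀.IsUMP ∧ Relation.ReflTransGen (fun X Y => AddsBenignLink Y X) S₀ S

/-- Augmented UMP of type 1: only benign midpoint-links of type 1 were added. -/
def PLS.IsAugmentedUMP1 {α : Type*} (S : PLS α) : Prop :=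
  ∃ S₀ : PLS α, S₀.IsUMP ∧ Relation.ReflTransGen (fun X Y => AddsBenignLink1 Y X) S₀ S

/-! ### Graphs -/

/-- `T` is the edge set of a triangle of `G`. -/
def IsTriangle {V : Type*} (G : SimpleGraph V) (T : Finset (Sym2 V)) : Prop :=
  ∃ a b c : V, G.Adj a b ∧ G.Adj b c ∧ G.Adj a c ∧ T = {s(a, b), s(b, c), s(a, c)}

/-- `Γ` is the edge set of a circuit of `G`. -/
def IsCircuitSet {V : Type*} (G : SimpleGraph V) (Γ : Finset (Sym2 V)) : Prop :=
  ∃ (v : V) (w : G.Walk v v), w.IsCycle ∧ w.edges.toFinset = Γ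

/-- `Γ` is the edge set of a chordless circuit of `G`. -/
def IsChordlessCircuit {V : Type*} (G : SimpleGraph V) (Γ : Finset (Sym2 V)) : Prop :=
  ∃ (v : V) (w : G.Walk v v), w.IsCycle ∧ w.edges.toFinset = Γ ∧
    ∀ a b : V, a ∈ w.support → b ∈ w.support → G.Adj a b → s(a, b) ∈ Γ

/-- `W` is the edge set of a wheel of `G` (degenerate wheel = triangle). -/
def IsWheel {V : Type*} (G : SimpleGraph V) (W : Finset (Sym2 V)) : Prop :=
  ∃ (n : ℕ) (hub : V) (v : ℕ → V), 2 ≤ n ∧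
    (∀ i j, i < n → j < n → i ≠ j → v i ≠ v j) ∧
    (∀ i, i < n → G.Adj hub (v i)) ∧
    (∀ i, i < n → G.Adj (v i) (v ((i + 1) % n))) ∧
    W = (Finset.range n).image (fun i => s(hub, v i)) ∪
        (Finset.range n).image (fun i => s(v i, v ((i + 1) % n)))

/-- Rank of an edge set `B` in the cycle matroid on the vertex set `V`:
`|V|` minus the number of connected components of `(V, B)`. -/
def grkOn (V : Type*) [Fintype V] (B : Finset (Sym2 V)) : ℕ :=
  Fintype.card V - Nat.card (SimpleGraph.fromEdgeSet (B : Set (Sym2 V))).ConnectedComponent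

/-- Rank of the cycle matroid of the graph `G` (on its full edge set). -/
def graphRank {V : Type*} [Fintype V] (G : SimpleGraph V) : ℕ :=
  Fintype.card V - Nat.card G.ConnectedComponent

/-- Closure of an edge set in the cycle matroid of `G`. -/
def graphCl {V : Type*} [Fintype V] (G : SimpleGraph V) (B : Finset (Sym2 V)) : Set (Sym2 V) :=
  {e | e ∈ G.edgeSet ∧ grkOn V (insert e B) = grkOn V B}

/-- The partition of the vertex set into connected components of `(V, B)`. -/
def compSetoid {V : Type*} (B : Finset (Sym2 V)) : Setoid V :=
  ⟨fun a b => (SimpleGraph.fromEdgeSet (B : Set (Sym2 V))).Reachable a b,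
    ⟨fun a => SimpleGraph.Reachable.refl a, fun h => h.symm, fun h h' => h.trans h'⟩⟩

/-- `ψ` line-preservingly models the PLS `S` by the graph `G`: it is a bijection from
the points onto the edges taking each line to (the edge set of) a triangle. -/
def LinePres {α V : Type*} (S : PLS α) (G : SimpleGraph V) (ψ : α → Sym2 V) : Prop :=
  Set.BijOn ψ (S.J : Set α) G.edgeSet ∧ ∀ ℓ ∈ S.Λ, IsTriangle G (ℓ.image ψ)

/-- Line-preserving rank-modeling by a graph. -/
def LinePresRankModels {α V : Type*} [Fintype V] (S : PLS α) (G : SimpleGraph V)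
    (ψ : α → Sym2 V) : Prop :=
  LinePres S G ψ ∧ (graphRank G : ℤ) = S.rk

/-- Cycle-preservation: the midpoints of each cycle map to a circuit of `G`. -/
def CyclePresCond {α V : Type*} (S : PLS α) (G : SimpleGraph V) (ψ : α → Sym2 V) : Prop :=
  ∀ C : PLSCycle α, C.In S.Λ → IsCircuitSet G (C.midSet.image ψ)

/-- Circuit-friendliness: each chordless circuit of `G` corresponds to a line or to
the set of midpoints of a cycle of `S`. -/
def CircuitFriendlyCond {α V : Type*} (S : PLS α) (G : SimpleGraph V) (ψ : α → Sym2 V) : Prop :=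
  ∀ Γ : Finset (Sym2 V), IsChordlessCircuit G Γ →
    (∃ ℓ ∈ S.Λ, ∀ x ∈ S.J, (ψ x ∈ Γ ↔ x ∈ ℓ)) ∨
    (∃ C : PLSCycle α, C.In S.Λ ∧ ∀ x ∈ S.J, (ψ x ∈ Γ ↔ C.IsMidpointPt x))

/-! ### Matroids -/

/-- A (finite) matroid on a finite ground set, given by its independent sets. -/
structure FinMatroid (β : Type*) where
  E : Finset β
  Indep : Finset β → Prop
  indep_subset : ∀ I, Indep I → I ⊆ E
  indep_empty : Indep ∅
  indep_mono : ∀ I J, Indep J → I ⊆ J → Indep I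
  indep_exchange : ∀ I J, Indep I → Indep J → I.card < J.card →
    ∃ x ∈ J, x ∉ I ∧ Indep (insert x I)

namespace FinMatroid
variable {β : Type*}

/-- Rank of a subset. -/
def rkOn (M : FinMatroid β) (X : Finset β) : ℕ :=
  (X.powerset.filter fun I => M.Indep I).sup Finset.card

/-- Rank of the matroid. -/
def rk (M : FinMatroid β) : ℕ := M.rkOn M.E

/-- Closure of a subset. -/
def cl (M : FinMatroid β) (X : Finset β) : Finset β :=
  M.E.filter fun e => M.rkOn (insert e (X ∩ M.E)) = M.rkOn (X ∩ M.E)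

/-- Simple matroid: all subsets of cardinality at most 2 are independent. -/
def IsSimple (M : FinMatroid β) : Prop :=
  ∀ X : Finset β, X ⊆ M.E → X.card ≤ 2 → M.Indep X

/-- Flat (closed set) of a matroid. -/
def Flat (M : FinMatroid β) (F : Finset β) : Prop := F ⊆ M.E ∧ M.cl F = F

/-- Binary matroid: representable over GF(2). -/
def IsBinary (M : FinMatroid β) : Prop :=
  ∃ (m : ℕ) (ρ : β → (Fin m → ZMod 2)),
    ∀ I : Finset β, I ⊆ M.E →
      (M.Indep I ↔ LinearIndependent (ZMod 2) fun x : {y // y ∈ I} => ρ x.1)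

/-- Graphic matroid: isomorphic to the cycle matroid of a graph. -/
def IsGraphic (M : FinMatroid β) : Prop :=
  ∃ (k : ℕ) (G : SimpleGraph (Fin k)) (φ : β → Sym2 (Fin k)),
    Set.BijOn φ (M.E : Set β) G.edgeSet ∧
    ∀ I : Finset β, I ⊆ M.E →
      (M.Indep I ↔ ∀ Γ : Finset (Sym2 (Fin k)), IsCircuitSet G Γ →
        ¬ (Γ : Set (Sym2 (Fin k))) ⊆ φ '' (I : Set β))

end FinMatroid

/-- `ψ` line-preservingly models the PLS `S` by the matroid `M`: a bijection from the
points onto the ground set taking each line to a dependent set. -/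
def LinePresMatroid {α β : Type*} (S : PLS α) (M : FinMatroid β) (ψ : α → β) : Prop :=
  Set.BijOn ψ (S.J : Set α) (M.E : Set β) ∧ ∀ ℓ ∈ S.Λ, ¬ M.Indep (ℓ.image ψ)

/-- Graph-trigger: every simple binary matroid that line-preservingly rank-models `S`
is graphic. -/
def PLS.GraphTrigger {α : Type*} (S : PLS α) : Prop :=
  ∀ (β : Type) (M : FinMatroid β) (ψ : α → β),
    M.IsSimple → M.IsBinary → LinePresMatroid S M ψ → (M.rk : ℤ) = S.rk → M.IsGraphic

/-! ### Lines of modular lattices, MoPLSes, lattice-modeling -/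

/-- All pairs of distinct elements of `m` have the same join. -/
def ConstJoin {L : Type*} [Lattice L] (m : Finset L) : Prop :=
  ∀ p ∈ m, ∀ q ∈ m, ∀ p' ∈ m, ∀ q' ∈ m, p ≠ q → p' ≠ q' → p ⊔ q = p' ⊔ q'

/-- A line of a modular lattice: a 3-element subset of `J(L)` with constant pairwise
join, maximal with this property. -/
def IsLine (L : Type*) [Lattice L] [Fintype L] (ℓ : Finset L) : Prop :=
  ℓ ⊆ JFinset L ∧ ℓ.card = 3 ∧ ConstJoin ℓ ∧
    ∀ m : Finset L, m ⊆ JFinset L → ℓ ⊆ m → ConstJoin m → m = ℓ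

/-- The join of a line. -/
def lineJoin {L : Type*} [Lattice L] [BoundedOrder L] (ℓ : Finset L) : L := ℓ.sup id

/-- A MoPLS of `L`: the PLS on `J(L)` whose lines form a maximal family of pairwise
inequivalent lines of `L`. -/
def IsMoPLS (L : Type*) [Lattice L] [BoundedOrder L] [Fintype L] (S : PLS L) : Prop :=
  S.J = JFinset L ∧ (∀ ℓ ∈ S.Λ, IsLine L ℓ) ∧
    (∀ ℓ ∈ S.Λ, ∀ ℓ' ∈ S.Λ, ℓ ≠ ℓ' → lineJoin ℓ ≠ lineJoin ℓ') ∧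
    ∀ m : Finset L, IsLine L m → ∃ ℓ ∈ S.Λ, lineJoin ℓ = lineJoin m

/-- A graph lattice-models a finite lattice `L` via `φ`: `φ` is a bijection from
`J(L)` onto the edge set, all sets `φ(J(a))` are closed in the cycle matroid, and the
rank of the cycle matroid equals the height of `L`. -/
def LatticeModelsGraph (L : Type*) [Lattice L] [BoundedOrder L] [Fintype L]
    {V : Type*} [Fintype V] (G : SimpleGraph V) (φ : L → Sym2 V) : Prop :=
  Set.BijOn φ (JFinset L : Set L) G.edgeSet ∧
    (∀ a : L, graphCl G ((Jle a).image φ) = (((Jle a).image φ : Finset (Sym2 V)) : Set (Sym2 V))) ∧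
    graphRank G = latHeight L


/-! ### Auxiliary material for statement_2 -/

namespace PLSAux

variable {α : Type}

/-- Two distinct lines of a PLS share at most one point. -/
lemma pls_inter_unique (S : PLS α) {ℓ m : Finset α} (hℓ : ℓ ∈ S.Λ) (hm : m ∈ S.Λ)
    (hne : ℓ ≠ m) {u v : α} (hu : u ∈ ℓ) (hu' : u ∈ m) (hv : v ∈ ℓ) (hv' : v ∈ m) : u = v := by
  by_contra h
  have h2 : 1 < (ℓ ∩ m).card :=
    Finset.one_lt_card.mpr ⟨u, by simp [hu, hu'], v, by simp [hv, hv'], h⟩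
  have := S.line_inter ℓ hℓ m hm hne
  omega

/-- In a 3-element set, the "third point" besides two given distinct points is unique. -/
lemma third_eq {m : Finset α} (hcard : m.card = 3) {u v q r : α}
    (hu : u ∈ m) (hv : v ∈ m) (hq : q ∈ m) (hr : r ∈ m) (huv : u ≠ v)
    (hqu : q ≠ u) (hqv : q ≠ v) (hru : r ≠ u) (hrv : r ≠ v) : q = r := by
  by_contra h
  have hsub : ({u, v, q, r} : Finset α) ⊆ m := by
    intro x hx
    simp only [Finset.mem_insert, Finset.mem_singleton] at hx
    rcases hx with h | h | h | h <;> subst h <;> assumption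
  have hc : ({u, v, q, r} : Finset α).card = 4 := by
    rw [Finset.card_insert_of_notMem (by simp [huv, hqu.symm, hru.symm]),
      Finset.card_insert_of_notMem (by simp [hqv.symm, hrv.symm]),
      Finset.card_insert_of_notMem (by simp [h]), Finset.card_singleton]
  have := Finset.card_le_card hsub
  omega

/-- There is a third point in a 3-element set besides two given distinct points. -/
lemma third_exists {m : Finset α} (hcard : m.card = 3) {u v : α}
    (hu : u ∈ m) (hv : v ∈ m) (huv : u ≠ v) : ∃ z ∈ m, z ≠ u ∧ z ≠ v := by
  by_contra h
  push_neg at h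
  have hsub : m ⊆ {u, v} := by
    intro x hx
    rcases eq_or_ne x u with h2 | h2
    · simp [h2]
    · simp [h x hx h2]
  have h1 := Finset.card_le_card hsub
  have h2 : ({u, v} : Finset α).card ≤ 2 := (Finset.card_insert_le _ _).trans (by simp)
  omega

/-- Rotation principle on `ZMod`-like indices. -/
lemma rot {n : ℕ} (hn : 0 < n) (P : ℕ → Prop) (a : ℕ) (ha : a < n) (hPa : P a)
    (step : ∀ i, i < n → P i → P ((i + 1) % n)) : ∀ s, s < n → P s := by
  have key : ∀ d, P ((a + d) % n) := by
    intro d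
    induction d with
    | zero => simpa [Nat.mod_eq_of_lt ha] using hPa
    | succ d ih =>
      have h1 := step _ (Nat.mod_lt _ hn) ih
      have h2 : ((a + d) % n + 1) % n = (a + (d + 1)) % n := by
        rw [Nat.mod_add_mod]; ring_nf
      rwa [h2] at h1
  intro s hs
  have : (a + (n + s - a)) % n = s := by
    have h1 : a + (n + s - a) = n + s := by omega
    rw [h1, Nat.add_mod_left, Nat.mod_eq_of_lt hs]
  have := key (n + s - a)
  rwa [‹(a + (n + s - a)) % n = s›] at this

section CycleFacts

variable {α : Type} {S : PLS α} {C : PLSCycle α}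

lemma closing_memΛ (hC : C.In S.Λ) : C.closing ∈ S.Λ := hC.2

lemma lineC_memΛ (hC : C.In S.Λ) : ∀ i, i + 1 < C.n → C.line i ∈ S.Λ := hC.1

lemma closing_ne_line : ∀ i, i + 1 < C.n → C.closing ≠ C.line i := by
  obtain ⟨q, hq1, hq2⟩ := C.closing_new
  intro i hi h
  exact hq2 i hi (h ▸ hq1)

lemma cycle_three_le (hC : C.In S.Λ) : 3 ≤ C.n := by
  have h2 := C.two_le
  by_contra h
  have hn : C.n = 2 := by omega
  have h01 : (0 : ℕ) + 1 < C.n := by omega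
  have hl0 : C.line 0 ∈ S.Λ := hC.1 0 h01
  have hps : C.p 1 ∈ C.closing := by have := C.closing_last; rwa [hn] at this
  have := pls_inter_unique S (closing_memΛ hC) hl0 (closing_ne_line 0 h01)
    C.closing_first (C.p_mem_left 0 h01) hps (C.p_mem_right 0 h01)
  exact C.p_ne 0 h01 (by simpa using this)

lemma p_zero_ne_p_last (hC : C.In S.Λ) : C.p 0 ≠ C.p (C.n - 1) := by
  have hn3 := cycle_three_le hC
  intro heq
  rcases eq_or_lt_of_le hn3 with h3 | h4
  · -- n = 3
    have hn : C.n = 3 := h3.symm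
    have h01 : (0 : ℕ) + 1 < C.n := by omega
    have h12 : (1 : ℕ) + 1 < C.n := by omega
    have hne : C.line 0 ≠ C.line 1 := C.lines_ne 0 1 (by omega) (by omega)
    have hp2 : C.p 2 ∈ C.line 1 := C.p_mem_right 1 h12
    have hp0 : C.p 0 ∈ C.line 1 := by
      rw [heq]
      have h5 : C.n - 1 = 2 := by omega
      rw [h5]
      exact hp2
    have := pls_inter_unique S (hC.1 0 h01) (hC.1 1 h12) hne
      (C.p_mem_left 0 h01) hp0 (C.p_mem_right 0 h01) (C.p_mem_left 1 h12)
    exact C.p_ne 0 h01 this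
  · -- n ≥ 4
    have h1 : 0 < C.n - 2 := by omega
    have h2 : (C.n - 2) + 1 < C.n := by omega
    have := (C.lines_inter_iff 0 (C.n - 2) h1 h2).mp
      ⟨C.p 0, by
        refine Finset.mem_inter.mpr ⟨C.p_mem_left 0 (by omega), ?_⟩
        have := C.p_mem_right (C.n - 2) h2
        have heq2 : C.n - 2 + 1 = C.n - 1 := by omega
        rw [heq2] at this
        rw [heq]; exact this⟩
    omega

lemma cline_eq_line {i : ℕ} (h : i + 1 < C.n) : C.cline i = C.line i := if_pos h

lemma cline_eq_closing {i : ℕ} (h : ¬ i + 1 < C.n) : C.cline i = C.closing := if_neg h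

lemma cline_memΛ (hC : C.In S.Λ) : ∀ i, i < C.n → C.cline i ∈ S.Λ := by
  intro i hi
  unfold PLSCycle.cline
  split
  · exact hC.1 i (by assumption)
  · exact hC.2

lemma p_mem_cline (hC : C.In S.Λ) : ∀ i, i < C.n → C.p i ∈ C.cline i := by
  intro i hi
  unfold PLSCycle.cline
  split
  · exact C.p_mem_left i (by assumption)
  · have : i = C.n - 1 := by omega
    rw [this]
    exact C.closing_last

lemma psucc_mem_cline (hC : C.In S.Λ) : ∀ i, i < C.n → C.p ((i + 1) % C.n) ∈ C.cline i := by
  intro i hi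
  unfold PLSCycle.cline
  split
  · rw [Nat.mod_eq_of_lt (by omega)]
    exact C.p_mem_right i (by assumption)
  · have h1 : i = C.n - 1 := by omega
    have h2 : (i + 1) % C.n = 0 := by
      rw [h1]
      have : C.n - 1 + 1 = C.n := by omega
      rw [this, Nat.mod_self]
    rw [h2]
    exact C.closing_first

lemma cline_ne (hC : C.In S.Λ) : ∀ i k, i < k → k < C.n → C.cline i ≠ C.cline k := by
  intro i k hik hk
  have hi1 : i + 1 < C.n := by omega
  rw [cline_eq_line hi1]
  by_cases hk1 : k + 1 < C.n
  · rw [cline_eq_line hk1]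
    exact C.lines_ne i k hik hk1
  · rw [cline_eq_closing hk1]
    exact (closing_ne_line i hi1).symm

lemma cline_ne' (hC : C.In S.Λ) : ∀ i k, i ≠ k → i < C.n → k < C.n → C.cline i ≠ C.cline k := by
  intro i k hne hi hk
  rcases lt_or_gt_of_ne hne with h | h
  · exact cline_ne hC i k h hk
  · exact (cline_ne hC k i h hi).symm

lemma p_ne_general (hC : C.In S.Λ) : ∀ i k, i < k → k < C.n → C.p i ≠ C.p k := by
  intro i k hik hk heq
  rcases eq_or_lt_of_le (Nat.succ_le_of_lt hik) with h1 | h1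
  · -- k = i + 1
    have hk' : k = i + 1 := by omega
    subst hk'
    exact C.p_ne i (by omega) heq
  · -- k ≥ i + 2
    have hi1 : i + 1 < C.n := by omega
    have hkm : (k - 1) + 1 < C.n := by omega
    have hik1 : i < k - 1 := by omega
    have hmem : C.p i ∈ C.line i ∩ C.line (k - 1) := by
      refine Finset.mem_inter.mpr ⟨C.p_mem_left i hi1, ?_⟩
      have := C.p_mem_right (k - 1) hkm
      have h2 : k - 1 + 1 = k := by omega
      rw [h2] at this
      rw [heq]; exact this
    have := (C.lines_inter_iff i (k - 1) hik1 hkm).mp ⟨C.p i, hmem⟩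
    -- k - 1 = i + 1, so k = i + 2
    have hk2 : k = i + 2 := by omega
    have hii1 : i + 1 + 1 < C.n := by omega
    have hne : C.line i ≠ C.line (i + 1) := C.lines_ne i (i + 1) (by omega) hii1
    have hmem2 : C.p i ∈ C.line (i + 1) := by
      have := (Finset.mem_inter.mp hmem).2
      have h3 : k - 1 = i + 1 := by omega
      rwa [h3] at this
    have := pls_inter_unique S (hC.1 i hi1) (hC.1 (i + 1) hii1) hne
      (C.p_mem_left i hi1) hmem2 (C.p_mem_right i hi1) (C.p_mem_left (i + 1) hii1)
    exact C.p_ne i hi1 this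

lemma p_ne_of_idx_ne (hC : C.In S.Λ) : ∀ i k, i ≠ k → i < C.n → k < C.n → C.p i ≠ C.p k := by
  intro i k hne hi hk
  rcases lt_or_gt_of_ne hne with h | h
  · exact p_ne_general hC i k h hk
  · exact (p_ne_general hC k i h hi).symm

lemma p_mem_prev_cline (hC : C.In S.Λ) : ∀ i, i < C.n → C.p i ∈ C.cline ((i + C.n - 1) % C.n) := by
  intro i hi
  have hn3 := cycle_three_le hC
  rcases Nat.eq_zero_or_pos i with h0 | h0
  · subst h0
    have h1 : (0 + C.n - 1) % C.n = C.n - 1 := by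
      rw [Nat.zero_add]; exact Nat.mod_eq_of_lt (by omega)
    rw [h1, cline_eq_closing (by omega)]
    exact C.closing_first
  · have h1 : (i + C.n - 1) % C.n = i - 1 := by
      have h2 : i + C.n - 1 = (i - 1) + C.n := by omega
      rw [h2, Nat.add_mod_right]
      exact Nat.mod_eq_of_lt (by omega)
    rw [h1, cline_eq_line (by omega)]
    have := C.p_mem_right (i - 1) (by omega)
    have h3 : i - 1 + 1 = i := by omega
    rwa [h3] at this

lemma prev_idx_ne (hC : C.In S.Λ) : ∀ i, i < C.n → (i + C.n - 1) % C.n ≠ i := by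
  intro i hi
  have hn3 := cycle_three_le hC
  rcases Nat.eq_zero_or_pos i with h0 | h0
  · subst h0
    rw [Nat.zero_add, Nat.mod_eq_of_lt (by omega)]
    omega
  · have h1 : (i + C.n - 1) % C.n = i - 1 := by
      have h2 : i + C.n - 1 = (i - 1) + C.n := by omega
      rw [h2, Nat.add_mod_right]
      exact Nat.mod_eq_of_lt (by omega)
    rw [h1]; omega

lemma succ_idx_ne (hC : C.In S.Λ) : ∀ i, i < C.n → (i + 1) % C.n ≠ i := by
  intro i hi
  have hn3 := cycle_three_le hC
  by_cases h : i + 1 < C.n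
  · rw [Nat.mod_eq_of_lt h]; omega
  · have h1 : i = C.n - 1 := by omega
    have h2 : (i + 1) % C.n = 0 := by
      rw [h1]
      have : C.n - 1 + 1 = C.n := by omega
      rw [this, Nat.mod_self]
    rw [h2]; omega

lemma junction_pair_ne (hC : C.In S.Λ) : ∀ i, i < C.n → C.p i ≠ C.p ((i + 1) % C.n) :=
  fun i hi => p_ne_of_idx_ne hC i ((i + 1) % C.n) (Ne.symm (succ_idx_ne hC i hi)) hi
    (Nat.mod_lt _ (by have := cycle_three_le hC; omega))

end CycleFacts

section TreeToUMP

variable {α : Type} {S : PLS α} {t : ℕ} {F : ℕ → PLS α}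

lemma succ_mod_inj {n a b : ℕ} (ha : a < n) (hb : b < n) (h : (a + 1) % n = (b + 1) % n) :
    a = b := by
  by_cases h1 : a + 1 < n <;> by_cases h2 : b + 1 < n
  · rw [Nat.mod_eq_of_lt h1, Nat.mod_eq_of_lt h2] at h; omega
  · have hb1 : b + 1 = n := by omega
    rw [Nat.mod_eq_of_lt h1, hb1, Nat.mod_self] at h; omega
  · have ha1 : a + 1 = n := by omega
    rw [Nat.mod_eq_of_lt h2, ha1, Nat.mod_self] at h; omega
  · omega

lemma line_piece_unique (htree : S.IsTreeOf t F) {ℓ : Finset α} {i k : ℕ}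
    (hi : i < t) (hk : k < t) (hli : ℓ ∈ (F i).Λ) (hlk : ℓ ∈ (F k).Λ) : i = k := by
  obtain ⟨hJ, hΛ, hsep⟩ := htree
  by_contra hne
  wlog h : i < k generalizing i k
  · exact this hk hi hlk hli (Ne.symm hne) (by omega)
  obtain ⟨x, hx⟩ := hsep k (by omega) hk
  have hsub : ℓ ⊆ (F k).J ∩ (Finset.range k).biUnion (fun j => (F j).J) := by
    intro y hy
    exact Finset.mem_inter.mpr ⟨(F k).line_sub ℓ hlk hy,
      Finset.mem_biUnion.mpr ⟨i, Finset.mem_range.mpr h, (F i).line_sub ℓ hli hy⟩⟩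
  rw [hx] at hsub
  have h1 := Finset.card_le_card hsub
  have h2 := (F i).line_card ℓ hli
  simp at h1
  omega

lemma cycle_one_piece (htree : S.IsTreeOf t F) {C : PLSCycle α} (hC : C.In S.Λ) :
    ∃ a, a < t ∧ ∀ i, i < C.n → C.cline i ∈ (F a).Λ := by
  classical
  have hn3 := cycle_three_le hC
  have hn0 : 0 < C.n := by omega
  have hmem : ∀ i, ∃ a, (i < C.n → a < t ∧ C.cline i ∈ (F a).Λ) := by
    intro i
    by_cases h : i < C.n
    · have h1 := cline_memΛ hC i h
      rw [htree.2.1] at h1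
      obtain ⟨a, ha, h2⟩ := Finset.mem_biUnion.mp h1
      exact ⟨a, fun _ => ⟨Finset.mem_range.mp ha, h2⟩⟩
    · exact ⟨0, fun hh => absurd hh h⟩
  choose π hπ using hmem
  set M := (Finset.range C.n).image π with hM
  have hMne : M.Nonempty := ⟨π 0, Finset.mem_image.mpr ⟨0, Finset.mem_range.mpr hn0, rfl⟩⟩
  set j := M.max' hMne with hj
  obtain ⟨i0, hi0, hπi0⟩ := Finset.mem_image.mp (M.max'_mem hMne)
  rw [Finset.mem_range] at hi0
  have hjt : j < t := by rw [hj, ← hπi0]; exact (hπ i0 hi0).1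
  by_cases hall : ∀ i, i < C.n → π i = j
  · exact ⟨j, hjt, fun i hi => (hall i hi) ▸ (hπ i hi).2⟩
  push_neg at hall
  obtain ⟨i1, hi1, hπi1⟩ := hall
  exfalso
  have hle : ∀ s, s < C.n → π s ≤ j :=
    fun s hs => Finset.le_max' M (π s) (Finset.mem_image.mpr ⟨s, Finset.mem_range.mpr hs, rfl⟩)
  -- find boundary positions
  have claim1 : ∃ a, a < C.n ∧ π a = j ∧ π ((a + 1) % C.n) ≠ j := by
    by_contra h
    push_neg at h
    have := rot hn0 (fun s => π s = j) i0 hi0 hπi0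
      (fun i hi hP => h i hi hP) i1 hi1
    exact hπi1 this
  have claim2 : ∃ b, b < C.n ∧ π b ≠ j ∧ π ((b + 1) % C.n) = j := by
    by_contra h
    push_neg at h
    have := rot hn0 (fun s => π s ≠ j) i1 hi1 hπi1
      (fun i hi hP => h i hi hP) i0 hi0
    exact this hπi0
  obtain ⟨a, han, hπa, hπsa⟩ := claim1
  obtain ⟨b, hbn, hπb, hπsb⟩ := claim2
  set sa := (a + 1) % C.n with hsa
  set sb := (b + 1) % C.n with hsb
  have hsan : sa < C.n := Nat.mod_lt _ hn0
  have hsbn : sb < C.n := Nat.mod_lt _ hn0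
  have hj0 : 0 < j := by
    have := hle sa hsan
    omega
  obtain ⟨x, hx⟩ := htree.2.2 j hj0 hjt
  have hya : C.p sa = x := by
    have h1 : C.p sa ∈ (F j).J := by
      have := psucc_mem_cline hC a han
      exact (F j).line_sub _ (hπa ▸ (hπ a han).2) this
    have h2 : C.p sa ∈ (Finset.range j).biUnion (fun k => (F k).J) := by
      refine Finset.mem_biUnion.mpr ⟨π sa, Finset.mem_range.mpr ?_, ?_⟩
      · have := hle sa hsan; omega
      · exact (F (π sa)).line_sub _ (hπ sa hsan).2 (p_mem_cline hC sa hsan)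
    have : C.p sa ∈ ({x} : Finset α) := hx ▸ Finset.mem_inter.mpr ⟨h1, h2⟩
    simpa using this
  have hyb : C.p sb = x := by
    have h1 : C.p sb ∈ (F j).J := by
      have := p_mem_cline hC sb hsbn
      exact (F j).line_sub _ (hπsb ▸ (hπ sb hsbn).2) this
    have h2 : C.p sb ∈ (Finset.range j).biUnion (fun k => (F k).J) := by
      refine Finset.mem_biUnion.mpr ⟨π b, Finset.mem_range.mpr ?_, ?_⟩
      · have := hle b hbn; omega
      · exact (F (π b)).line_sub _ (hπ b hbn).2 (psucc_mem_cline hC b hbn)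
    have : C.p sb ∈ ({x} : Finset α) := hx ▸ Finset.mem_inter.mpr ⟨h1, h2⟩
    simpa using this
  have hab : a ≠ b := fun h => hπb (h ▸ hπa)
  have hsasb : sa ≠ sb := fun h => hab (succ_mod_inj han hbn h)
  exact p_ne_of_idx_ne hC sa sb hsasb hsan hsbn (hya.trans hyb.symm)

lemma isUMP_of_tree (htree : S.IsTreeOf t F) (hQ : ∀ i, i < t → (F i).IsQIMP) :
    S.IsUMP := by
  intro C C' hC hC' i j hi hj heq q q' hq1 hq2
  obtain ⟨a, hat, ha⟩ := cycle_one_piece htree hC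
  obtain ⟨a', hat', ha'⟩ := cycle_one_piece htree hC'
  have hm : C.cline i ∈ (F a).Λ := ha i hi
  have hm' : C.cline i ∈ (F a').Λ := heq ▸ ha' j hj
  have haa : a = a' := line_piece_unique htree hat hat' hm hm'
  subst haa
  obtain ⟨r, hrm, hr⟩ := hQ a hat (C.cline i) hm
  have key : ∀ (D : PLSCycle α), D.In S.Λ → ∀ k, k < D.n →
      (∀ s, s < D.n → D.cline s ∈ (F a).Λ) → D.cline k = C.cline i →
      ∀ w, D.IsMidpoint k w → w = r := by
    intro D hD k hk hDk hkl w hw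
    have hn0 : 0 < D.n := by have := cycle_three_le hD; omega
    set u := D.p k with hu_def
    set u' := D.p ((k + 1) % D.n) with hu'_def
    have hu : u ∈ D.cline k := p_mem_cline hD k hk
    have hu' : u' ∈ D.cline k := psucc_mem_cline hD k hk
    have huu' : u ≠ u' := junction_pair_ne hD k hk
    have hcard : (D.cline k).card = 3 := S.line_card _ (cline_memΛ hD k hk)
    have hrmem : r ∈ D.cline k := hkl ▸ hrm
    -- r differs from both junctions
    have hprevlt : (k + D.n - 1) % D.n < D.n := Nat.mod_lt _ hn0
    have hsucclt : (k + 1) % D.n < D.n := Nat.mod_lt _ hn0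
    have hru : r ≠ u := by
      intro h
      have h1 : u ∈ D.cline ((k + D.n - 1) % D.n) := p_mem_prev_cline hD k hk
      have h2 : D.cline ((k + D.n - 1) % D.n) ≠ C.cline i :=
        hkl ▸ cline_ne' hD _ k (prev_idx_ne hD k hk) hprevlt hk
      exact hr _ (hDk _ hprevlt) h2 (h ▸ h1)
    have hru' : r ≠ u' := by
      intro h
      have h1 : u' ∈ D.cline ((k + 1) % D.n) := p_mem_cline hD _ hsucclt
      have h2 : D.cline ((k + 1) % D.n) ≠ C.cline i :=
        hkl ▸ cline_ne' hD _ k (succ_idx_ne hD k hk) hsucclt hk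
      exact hr _ (hDk _ hsucclt) h2 (h ▸ h1)
    exact third_eq hcard hu hu' hw.1 hrmem huu' hw.2.1 hw.2.2 hru hru'
  rw [key C hC i hi ha rfl q hq1, key C' hC' j hj ha' heq.symm q' hq2]

end TreeToUMP

section Walks

variable {α : Type}

/-- A walk of lines inside `Δ` starting at the point `w`. -/
def IsWalk (Δ : Finset (Finset α)) (k : ℕ) (f : ℕ → Finset α) (w : α) : Prop :=
  0 < k ∧ (∀ i, i < k → f i ∈ Δ) ∧ w ∈ f 0 ∧ ∀ i, i + 1 < k → (f i ∩ f (i + 1)).Nonempty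

lemma walk_splice {Δ : Finset (Finset α)} {k : ℕ} {f : ℕ → Finset α} {w : α}
    (hw : IsWalk Δ k f w) {i j0 : ℕ} (hij : i < j0) (hj0 : j0 < k)
    (hint : (f i ∩ f j0).Nonempty) :
    IsWalk Δ (i + 1 + (k - j0)) (fun r => if r ≤ i then f r else f (r + (j0 - i - 1))) w ∧
      (fun r => if r ≤ i then f r else f (r + (j0 - i - 1))) (i + 1 + (k - j0) - 1)
        = f (k - 1) := by
  obtain ⟨hk0, hmem, hst, hcons⟩ := hw
  set d := j0 - i - 1 with hd
  set k' := i + 1 + (k - j0) with hk'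
  constructor
  · refine ⟨by omega, ?_, ?_, ?_⟩
    · intro r hr
      by_cases h : r ≤ i
      · simp only [if_pos h]; exact hmem r (by omega)
      · simp only [if_neg h]; exact hmem _ (by omega)
    · simpa using hst
    · intro r hr
      by_cases h1 : r + 1 ≤ i
      · simp only [if_pos (by omega : r ≤ i), if_pos h1]
        exact hcons r (by omega)
      · by_cases h2 : r ≤ i
        · have hri : r = i := by omega
          simp only [if_pos h2, if_neg h1]
          subst hri
          have : r + 1 + d = j0 := by omega
          rw [this]
          exact hint
        · simp only [if_neg h2, if_neg h1]
          have : r + 1 + d = r + d + 1 := by omega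
          rw [this]
          exact hcons (r + d) (by omega)
  · have h : ¬ (k' - 1 ≤ i) := by omega
    simp only [if_neg h]
    congr 1
    omega

lemma walk_suffix {Δ : Finset (Finset α)} {k : ℕ} {f : ℕ → Finset α} {w w' : α}
    (hw : IsWalk Δ k f w) {i : ℕ} (hi : i < k) (hmem : w' ∈ f i) :
    IsWalk Δ (k - i) (fun r => f (i + r)) w' ∧
      (fun r => f (i + r)) (k - i - 1) = f (k - 1) := by
  obtain ⟨hk0, hm, hst, hcons⟩ := hw
  refine ⟨⟨by omega, fun r hr => hm _ (by omega), by simpa using hmem, ?_⟩, ?_⟩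
  · intro r hr
    simp only []
    have h : i + (r + 1) = (i + r) + 1 := by omega
    rw [h]
    exact hcons (i + r) (by omega)
  · simp only []
    congr 1
    omega

lemma walk_prefix {Δ : Finset (Finset α)} {k : ℕ} {f : ℕ → Finset α} {w : α}
    (hw : IsWalk Δ k f w) {i : ℕ} (hi : i < k) : IsWalk Δ (i + 1) f w := by
  obtain ⟨hk0, hm, hst, hcons⟩ := hw
  exact ⟨by omega, fun r hr => hm r (by omega), hst, fun r hr => hcons r (by omega)⟩

lemma walk_dedup {Δ : Finset (Finset α)} {k : ℕ} {f : ℕ → Finset α} {w : α}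
    (hw : IsWalk Δ k f w) {i : ℕ} (hi : i + 1 < k) (hdup : f i = f (i + 1)) :
    IsWalk Δ (k - 1) (fun r => if r ≤ i then f r else f (r + 1)) w ∧
      (fun r => if r ≤ i then f r else f (r + 1)) (k - 1 - 1) = f (k - 1) := by
  obtain ⟨hk0, hm, hst, hcons⟩ := hw
  constructor
  · refine ⟨by omega, ?_, by simpa using hst, ?_⟩
    · intro r hr
      by_cases h : r ≤ i
      · simp only [if_pos h]; exact hm r (by omega)
      · simp only [if_neg h]; exact hm _ (by omega)
    · intro r hr
      by_cases h1 : r + 1 ≤ i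
      · simp only [if_pos (by omega : r ≤ i), if_pos h1]
        exact hcons r (by omega)
      · by_cases h2 : r ≤ i
        · have hri : r = i := by omega
          simp only [if_pos h2, if_neg h1]
          subst hri
          rw [hdup]
          exact hcons (r + 1) (by omega)
        · simp only [if_neg h2, if_neg h1]
          exact hcons (r + 1) (by omega)
  · by_cases h : k - 1 - 1 ≤ i
    · have hik : i = k - 2 := by omega
      simp only [if_pos h]
      have h1 : k - 1 - 1 = i := by omega
      rw [h1, hdup]
      congr 1
      omega
    · simp only [if_neg h]
      congr 1
      omega

lemma walk_extend {Δ : Finset (Finset α)} {k : ℕ} {f : ℕ → Finset α} {w y : α}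
    {ℓ' : Finset α} (hw : IsWalk Δ k f w) (hy : y ∈ f (k - 1)) (hy' : y ∈ ℓ') (hℓ' : ℓ' ∈ Δ) :
    IsWalk Δ (k + 1) (fun r => if r < k then f r else ℓ') w ∧
      (fun r => if r < k then f r else ℓ') (k + 1 - 1) = ℓ' := by
  obtain ⟨hk0, hm, hst, hcons⟩ := hw
  constructor
  · refine ⟨by omega, ?_, by simp only [if_pos hk0]; exact hst, ?_⟩
    · intro r hr
      by_cases h : r < k
      · simp only [if_pos h]; exact hm r h
      · simp only [if_neg h]; exact hℓ'
    · intro r hr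
      by_cases h1 : r + 1 < k
      · simp only [if_pos (by omega : r < k), if_pos h1]
        exact hcons r h1
      · have hrk : r = k - 1 := by omega
        simp only [if_pos (by omega : r < k), if_neg h1]
        subst hrk
        exact ⟨y, Finset.mem_inter.mpr ⟨hy, hy'⟩⟩
  · simp only [Nat.add_sub_cancel, if_neg (lt_irrefl k)]

end Walks

section Extraction

variable {α : Type} {S : PLS α}

/-- From a walk avoiding the line `m` joining two distinct points of `m`, one can
extract a genuine cycle whose closing line is `m`. -/
lemma extract_cycle {Δ : Finset (Finset α)} {m : Finset α} (hΔ : Δ ⊆ S.Λ) (hm : m ∈ S.Λ)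
    (hmΔ : m ∉ Δ) {w : α} (hwm : w ∈ m)
    (hex : ∃ k f, IsWalk Δ k f w ∧ ∃ v, v ∈ m ∧ v ≠ w ∧ v ∈ f (k - 1)) :
    ∃ (C : PLSCycle α) (z : α), C.In S.Λ ∧ C.cline (C.n - 1) = m ∧ C.n - 1 < C.n ∧
      C.IsMidpoint (C.n - 1) z ∧ z ∈ m ∧ z ≠ w := by
  classical
  set Pk : ℕ → Prop := fun k => ∃ f, IsWalk Δ k f w ∧ ∃ v, v ∈ m ∧ v ≠ w ∧ v ∈ f (k - 1)
    with hPk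
  have hexP : ∃ k, Pk k := by
    obtain ⟨k, f, h1, h2⟩ := hex
    exact ⟨k, f, h1, h2⟩
  set k0 := Nat.find hexP with hk0def
  obtain ⟨f, hwalk, v, hvm, hvw, hvf⟩ := Nat.find_spec hexP
  rw [← hk0def] at hwalk hvf
  have hmin : ∀ k', k' < k0 → ¬ Pk k' := fun k' h => Nat.find_min hexP h
  have hmemΔ : ∀ i, i < k0 → f i ∈ Δ := hwalk.2.1
  have hmemΛ : ∀ i, i < k0 → f i ∈ S.Λ := fun i hi => hΔ (hmemΔ i hi)
  have hnem : ∀ i, i < k0 → f i ≠ m := fun i hi h => hmΔ (h ▸ hmemΔ i hi)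
  have hcons : ∀ i, i + 1 < k0 → (f i ∩ f (i + 1)).Nonempty := hwalk.2.2.2
  have hstart : w ∈ f 0 := hwalk.2.2.1
  have hk1 : 0 < k0 := hwalk.1
  -- k0 ≥ 2
  have hk2 : 2 ≤ k0 := by
    by_contra h
    have hk : k0 = 1 := by omega
    have hv0 : v ∈ f 0 := by rw [hk] at hvf; exact hvf

    exact hvw (pls_inter_unique S (hmemΛ 0 hk1) hm (hnem 0 hk1) hv0 hvm hstart hwm)
  -- (E1) non-consecutive lines are disjoint
  have E1 : ∀ i j0, i < j0 → j0 < k0 → j0 ≠ i + 1 → ¬ (f i ∩ f j0).Nonempty := by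
    intro i j0 hij hj0 hne hint
    obtain ⟨hw', hlast⟩ := walk_splice ⟨hk1, hmemΔ, hstart, hcons⟩ hij hj0 hint
    refine hmin (i + 1 + (k0 - j0)) (by omega) ⟨_, hw', v, hvm, hvw, ?_⟩
    have h9 := hvf
    rw [← hlast] at h9
    exact h9
  -- (E1') consecutive lines are distinct
  have E1' : ∀ i, i + 1 < k0 → f i ≠ f (i + 1) := by
    intro i hi hdup
    obtain ⟨hw', hlast⟩ := walk_dedup ⟨hk1, hmemΔ, hstart, hcons⟩ hi hdup
    refine hmin (k0 - 1) (by omega) ⟨_, hw', v, hvm, hvw, ?_⟩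
    have h9 := hvf
    rw [← hlast] at h9
    exact h9
  -- (E2) `w` appears only on the first line
  have E2 : ∀ i, 0 < i → i < k0 → w ∉ f i := by
    intro i h0 hik hwf
    obtain ⟨hw', hlast⟩ := walk_suffix ⟨hk1, hmemΔ, hstart, hcons⟩ hik hwf
    refine hmin (k0 - i) (by omega) ⟨_, hw', v, hvm, hvw, ?_⟩
    have h9 := hvf
    rw [← hlast] at h9
    exact h9
  -- (E3) other points of `m` appear only on the last line
  have E3 : ∀ i, i < k0 → ∀ y, y ∈ m → y ≠ w → y ∈ f i → i = k0 - 1 := by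
    intro i hik y hym hyw hyf
    by_contra h
    exact hmin (i + 1) (by omega)
      ⟨f, walk_prefix ⟨hk1, hmemΔ, hstart, hcons⟩ hik, y, hym, hyw, by simpa using hyf⟩
  -- (E4) the last line meets `m` only in `v`
  have E4 : ∀ y, y ∈ m → y ∈ f (k0 - 1) → y = v := by
    intro y hym hyf
    exact pls_inter_unique S (hmemΛ (k0 - 1) (by omega)) hm (hnem (k0 - 1) (by omega))
      hyf hym hvf hvm
  -- junction points
  set p : ℕ → α := fun i =>
    if hh : 0 < i ∧ i < k0 then (hcons (i - 1) (by omega)).choose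
    else if i = 0 then w else v with hp
  have hp0 : p 0 = w := by rw [hp]; simp
  have hpk0 : p k0 = v := by
    rw [hp]
    have h1 : ¬ (0 < k0 ∧ k0 < k0) := by omega
    simp only [dif_neg h1, if_neg (by omega : ¬ k0 = 0)]
  have hpmem : ∀ i, i + 1 < k0 → p (i + 1) ∈ f i ∧ p (i + 1) ∈ f (i + 1) := by
    intro i h2
    rw [hp]
    simp only [dif_pos (show 0 < i + 1 ∧ i + 1 < k0 from ⟨Nat.succ_pos i, h2⟩)]
    have hsp := (hcons (i + 1 - 1) (by omega)).choose_spec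
    rw [Finset.mem_inter] at hsp
    exact hsp
  have hpl : ∀ i, 0 < i → i < k0 → p i ∈ f i := by
    intro i h1 h2
    have h3 : i - 1 + 1 = i := by omega
    have := (hpmem (i - 1) (by omega)).2
    rwa [h3] at this
  have hpr : ∀ i, 0 < i → i < k0 → p i ∈ f (i - 1) := by
    intro i h1 h2
    have h3 : i - 1 + 1 = i := by omega
    have := (hpmem (i - 1) (by omega)).1
    rwa [h3] at this
  -- the path
  set P : PLSPath α := {
    n := k0 + 1
    two_le := by omega
    p := p
    line := f
    p_mem_left := by
      intro i hi
      rcases Nat.eq_zero_or_pos i with h | h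
      · subst h; rw [hp0]; exact hstart
      · exact hpl i h (by omega)
    p_mem_right := by
      intro i hi
      by_cases h : i + 1 < k0
      · exact (hpmem i h).1
      · have hik : i = k0 - 1 := by omega
        have h2 : i + 1 = k0 := by omega
        rw [h2, hpk0, hik]
        exact hvf
    p_ne := by
      intro i hi heq
      rcases Nat.eq_zero_or_pos i with h | h
      · subst h
        rw [hp0] at heq
        have h1 : 1 < k0 := by omega
        have := (hpmem 0 h1).2
        rw [← heq] at this
        exact E2 1 one_pos h1 this
      · by_cases h2 : i + 1 < k0
        · have ha := hpr i h (by omega)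
          have hb := (hpmem i h2).2
          rw [← heq] at hb
          have : (f (i - 1) ∩ f (i + 1)).Nonempty := ⟨p i, Finset.mem_inter.mpr ⟨ha, hb⟩⟩
          exact E1 (i - 1) (i + 1) (by omega) h2 (by omega) this
        · have h3 : i + 1 = k0 := by omega
          have ha := hpr i h (by omega)
          rw [heq, h3, hpk0] at ha
          have := E3 (i - 1) (by omega) v hvm hvw ha
          omega
    lines_ne := by
      intro i j hij hj heq
      by_cases h : j = i + 1
      · exact E1' i (by omega) (h ▸ heq)
      · have hcard : (f i).card = 3 := S.line_card _ (hmemΛ i (by omega))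
        have hne : (f i).Nonempty := Finset.card_pos.mp (by omega)
        refine E1 i j hij (by omega) h ?_
        rw [← heq]
        simpa using hne
    lines_inter_iff := by
      intro i j hij hj
      constructor
      · intro hint
        by_contra h
        exact E1 i j hij (by omega) h hint
      · intro h
        subst h
        exact hcons i (by omega)
  } with hP
  -- the cycle
  obtain ⟨z, hzm, hzw, hzv⟩ := third_exists (S.line_card m hm) hwm hvm (Ne.symm hvw)
  set C : PLSCycle α := {
    toPLSPath := P
    closing := m
    closing_last := by
      show p (k0 + 1 - 1) ∈ m
      simp only [Nat.add_sub_cancel]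
      rw [hpk0]
      exact hvm
    closing_first := by
      show p 0 ∈ m
      rw [hp0]
      exact hwm
    closing_new := by
      refine ⟨z, hzm, ?_⟩
      intro i hi hzf
      have := E3 i (Nat.lt_of_succ_lt_succ hi) z hzm hzw hzf
      subst this
      exact hzv (E4 z hzm hzf)
  } with hC
  have hCn : C.n = k0 + 1 := rfl
  have hlastidx : C.n - 1 = k0 := by rw [hCn]; omega
  have hcl : C.cline (C.n - 1) = m := by
    rw [hlastidx]
    exact cline_eq_closing (by rw [hCn]; omega)
  refine ⟨C, z, ⟨fun i hi => hmemΛ i (Nat.lt_of_succ_lt_succ hi), hm⟩, hcl,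
    by rw [hCn]; omega, ?_, hzm, hzw⟩
  refine ⟨by rw [hcl]; exact hzm, ?_, ?_⟩
  · rw [hlastidx]
    show z ≠ p k0
    rw [hpk0]
    exact hzv
  · rw [hlastidx]
    have h1 : (k0 + 1) % C.n = 0 := by rw [hCn]; exact Nat.mod_self _
    show z ≠ C.p ((k0 + 1) % C.n)
    rw [h1]
    show z ≠ p 0
    rw [hp0]
    exact hzw

end Extraction

section Heart

variable {α : Type} {S : PLS α}

lemma minimal_block_qimp (hUMP : S.IsUMP) {Γ : Finset (Finset α)} (hΓΛ : Γ ⊆ S.Λ)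
    (hbd : (Γ.biUnion id ∩ ((S.Λ \ Γ).biUnion id)).card ≤ 1)
    (hmin : ∀ Γ', Γ' ⊆ Γ → Γ'.Nonempty →
      (Γ'.biUnion id ∩ ((S.Λ \ Γ').biUnion id)).card ≤ 1 → Γ' = Γ) :
    ∀ ℓ ∈ Γ, ∃ q ∈ ℓ, ∀ ℓ' ∈ Γ, ℓ' ≠ ℓ → q ∉ ℓ' := by
  classical
  by_contra hbad
  push_neg at hbad
  obtain ⟨m, hmΓ, hbadm⟩ := hbad
  set Δ := Γ.erase m with hΔ
  have hmΛ : m ∈ S.Λ := hΓΛ hmΓ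
  have hΔΛ : Δ ⊆ S.Λ := (Finset.erase_subset m Γ).trans hΓΛ
  have hmΔ : m ∉ Δ := Finset.notMem_erase m Γ
  have L3 : ∀ x ∈ m, ∃ k f, IsWalk Δ k f x ∧ ∃ v, v ∈ m ∧ v ≠ x ∧ v ∈ f (k - 1) := by
    intro x hxm
    by_contra hno
    push_neg at hno
    set K := Δ.filter (fun ℓ => ∃ k f, IsWalk Δ k f x ∧ f (k - 1) = ℓ) with hK
    obtain ⟨ℓx, hℓxΓ, hℓxm, hxℓx⟩ := hbadm x hxm
    have hℓxΔ : ℓx ∈ Δ := Finset.mem_erase.mpr ⟨hℓxm, hℓxΓ⟩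
    have hℓxK : ℓx ∈ K := by
      refine Finset.mem_filter.mpr ⟨hℓxΔ, 1, fun _ => ℓx,
        ⟨one_pos, fun i _ => hℓxΔ, hxℓx, fun i h => absurd h (by omega)⟩, rfl⟩
    have hmK : m ∉ K := fun h => hmΔ (Finset.filter_subset _ _ h)
    have hKsubΓ : K ⊆ Γ := (Finset.filter_subset _ _).trans (Finset.erase_subset m Γ)
    -- (a): points of K on m equal x
    have ha : ∀ y, y ∈ K.biUnion id → y ∈ m → y = x := by
      intro y hy hym
      obtain ⟨ℓ, hℓK, hyℓ⟩ := Finset.mem_biUnion.mp hy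
      obtain ⟨hℓΔ, k, f, hwk, hlast⟩ := Finset.mem_filter.mp hℓK
      by_contra hyx
      exact hno k f hwk y hym hyx (by rw [hlast]; exact hyℓ)
    -- (b): points of K are on no Δ-line outside K
    have hb : ∀ y, y ∈ K.biUnion id → ∀ ℓ', ℓ' ∈ Δ → ℓ' ∉ K → y ∉ ℓ' := by
      intro y hy ℓ' hℓ'Δ hℓ'K hyℓ'
      obtain ⟨ℓ, hℓK, hyℓ⟩ := Finset.mem_biUnion.mp hy
      obtain ⟨hℓΔ, k, f, hwk, hlast⟩ := Finset.mem_filter.mp hℓK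
      obtain ⟨hw2, hlast2⟩ := walk_extend hwk (by rw [hlast]; exact hyℓ) hyℓ' hℓ'Δ
      exact hℓ'K (Finset.mem_filter.mpr ⟨hℓ'Δ, k + 1, _, hw2, hlast2⟩)
    set K' := Γ \ K with hK'
    have hmK' : m ∈ K' := Finset.mem_sdiff.mpr ⟨hmΓ, hmK⟩
    -- boundary control for K
    have hclaimK : ∀ y ∈ K.biUnion id ∩ ((S.Λ \ K).biUnion id),
        y = x ∨ y ∈ Γ.biUnion id ∩ ((S.Λ \ Γ).biUnion id) := by
      intro y hy
      rw [Finset.mem_inter] at hy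
      obtain ⟨ℓ', hℓ'm, hyℓ'⟩ := Finset.mem_biUnion.mp hy.2
      rw [Finset.mem_sdiff] at hℓ'm
      by_cases hΓ' : ℓ' ∈ Γ
      · by_cases hm' : ℓ' = m
        · exact Or.inl (ha y hy.1 (by rw [← hm']; exact hyℓ'))
        · exact absurd hyℓ' (hb y hy.1 ℓ' (Finset.mem_erase.mpr ⟨hm', hΓ'⟩) hℓ'm.2)
      · refine Or.inr (Finset.mem_inter.mpr ⟨?_, Finset.mem_biUnion.mpr
          ⟨ℓ', Finset.mem_sdiff.mpr ⟨hℓ'm.1, hΓ'⟩, hyℓ'⟩⟩)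
        obtain ⟨ℓ2, hℓ2, hyℓ2⟩ := Finset.mem_biUnion.mp hy.1
        exact Finset.mem_biUnion.mpr ⟨ℓ2, hKsubΓ hℓ2, hyℓ2⟩
    -- boundary control for K'
    have hclaimK' : ∀ y ∈ K'.biUnion id ∩ ((S.Λ \ K').biUnion id),
        y = x ∨ y ∈ Γ.biUnion id ∩ ((S.Λ \ Γ).biUnion id) := by
      intro y hy
      rw [Finset.mem_inter] at hy
      obtain ⟨ℓ', hℓ'm, hyℓ'⟩ := Finset.mem_biUnion.mp hy.2
      rw [Finset.mem_sdiff] at hℓ'm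
      by_cases hℓ'K : ℓ' ∈ K
      · have hyK : y ∈ K.biUnion id := Finset.mem_biUnion.mpr ⟨ℓ', hℓ'K, hyℓ'⟩
        obtain ⟨ℓ'', hℓ''K', hyℓ''⟩ := Finset.mem_biUnion.mp hy.1
        rw [hK', Finset.mem_sdiff] at hℓ''K'
        by_cases hm'' : ℓ'' = m
        · exact Or.inl (ha y hyK (by rw [← hm'']; exact hyℓ''))
        · exact absurd hyℓ''
            (hb y hyK ℓ'' (Finset.mem_erase.mpr ⟨hm'', hℓ''K'.1⟩) hℓ''K'.2)
      · have hℓ'Γ : ℓ' ∉ Γ := by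
          intro h
          exact hℓ'm.2 (Finset.mem_sdiff.mpr ⟨h, hℓ'K⟩)
        refine Or.inr (Finset.mem_inter.mpr ⟨?_, Finset.mem_biUnion.mpr
          ⟨ℓ', Finset.mem_sdiff.mpr ⟨hℓ'm.1, hℓ'Γ⟩, hyℓ'⟩⟩)
        obtain ⟨ℓ2, hℓ2, hyℓ2⟩ := Finset.mem_biUnion.mp hy.1
        exact Finset.mem_biUnion.mpr ⟨ℓ2, Finset.sdiff_subset hℓ2, hyℓ2⟩
    -- minimality contradiction
    by_cases hcase : ∀ y ∈ K.biUnion id ∩ ((S.Λ \ K).biUnion id), y = x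
    · have hc1 : (K.biUnion id ∩ ((S.Λ \ K).biUnion id)).card ≤ 1 := by
        have hsub : K.biUnion id ∩ ((S.Λ \ K).biUnion id) ⊆ {x} := by
          intro y hy
          simp [hcase y hy]
        exact (Finset.card_le_card hsub).trans (by simp)
      have heq := hmin K hKsubΓ ⟨ℓx, hℓxK⟩ hc1
      rw [← heq] at hmΓ
      exact hmK hmΓ
    · push_neg at hcase
      obtain ⟨y, hybK, hyx⟩ := hcase
      have hyB : y ∈ Γ.biUnion id ∩ ((S.Λ \ Γ).biUnion id) :=
        (hclaimK y hybK).resolve_left hyx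
      have hsub : ∀ y' ∈ K'.biUnion id ∩ ((S.Λ \ K').biUnion id), y' = x := by
        intro y' hy'
        rcases hclaimK' y' hy' with h | h
        · exact h
        · have hy'y : y' = y := Finset.card_le_one.mp hbd y' h y hyB
          subst hy'y
          have hyK : y' ∈ K.biUnion id := (Finset.mem_inter.mp hybK).1
          have hyK' : y' ∈ K'.biUnion id := (Finset.mem_inter.mp hy').1
          obtain ⟨ℓ2, hℓ2, hyℓ2⟩ := Finset.mem_biUnion.mp hyK'
          rw [hK', Finset.mem_sdiff] at hℓ2
          by_cases h2 : ℓ2 = m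
          · exact ha y' hyK (by rw [← h2]; exact hyℓ2)
          · exact absurd hyℓ2
              (hb y' hyK ℓ2 (Finset.mem_erase.mpr ⟨h2, hℓ2.1⟩) hℓ2.2)
      have hc1 : (K'.biUnion id ∩ ((S.Λ \ K').biUnion id)).card ≤ 1 := by
        have hsub2 : K'.biUnion id ∩ ((S.Λ \ K').biUnion id) ⊆ {x} := by
          intro y' hy'
          simp [hsub y' hy']
        exact (Finset.card_le_card hsub2).trans (by simp)
      have heq := hmin K' Finset.sdiff_subset ⟨m, hmK'⟩ hc1
      rw [← heq] at hℓxΓ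
      exact (Finset.mem_sdiff.mp hℓxΓ).2 hℓxK
  -- now build two cycles with different midpoints on m
  have hcard3 := S.line_card m hmΛ
  obtain ⟨w1, hw1⟩ := Finset.card_pos.mp (by omega : 0 < m.card)
  obtain ⟨C1, z1, hIn1, hcl1, hlt1, hmid1, hz1m, hz1w⟩ :=
    extract_cycle hΔΛ hmΛ hmΔ hw1 (L3 w1 hw1)
  obtain ⟨C2, z2, hIn2, hcl2, hlt2, hmid2, hz2m, hz2z1⟩ :=
    extract_cycle hΔΛ hmΛ hmΔ hz1m (L3 z1 hz1m)
  exact hz2z1 (hUMP C2 C1 hIn2 hIn1 _ _ hlt2 hlt1 (hcl2.trans hcl1.symm) z2 z1 hmid2 hmid1)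

end Heart

section Assemble

variable {α : Type}

lemma biUnion_piece_last {β : Type} (t : ℕ) (G F : ℕ → Finset β) (A : Finset β)
    (h0 : G t = A) (hrest : ∀ j, j ≠ t → G j = F j) :
    (Finset.range (t + 1)).biUnion G = (Finset.range t).biUnion F ∪ A := by
  ext y
  simp only [Finset.mem_biUnion, Finset.mem_range, Finset.mem_union]
  constructor
  · rintro ⟨i, hi, hy⟩
    by_cases h : i = t
    · subst h; rw [h0] at hy; exact Or.inr hy
    · rw [hrest i h] at hy; exact Or.inl ⟨i, by omega, hy⟩
  · rintro (⟨i, hi, hy⟩ | hy)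
    · exact ⟨i, by omega, by rw [hrest i (by omega)]; exact hy⟩
    · exact ⟨t, by omega, by rw [h0]; exact hy⟩

lemma biUnion_piece_zero {β : Type} {t : ℕ} (ht : 0 < t) (G F : ℕ → Finset β)
    (A : Finset β) (h0 : G 0 = F 0 ∪ A) (hrest : ∀ j, j ≠ 0 → G j = F j) :
    (Finset.range t).biUnion G = (Finset.range t).biUnion F ∪ A := by
  ext y
  simp only [Finset.mem_biUnion, Finset.mem_range, Finset.mem_union]
  constructor
  · rintro ⟨i, hi, hy⟩
    by_cases h : i = 0
    · subst h
      rw [h0, Finset.mem_union] at hy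
      rcases hy with h | h
      · exact Or.inl ⟨0, ht, h⟩
      · exact Or.inr h
    · rw [hrest i h] at hy; exact Or.inl ⟨i, hi, hy⟩
  · rintro (⟨i, hi, hy⟩ | hy)
    · by_cases h : i = 0
      · subst h; exact ⟨0, ht, by rw [h0]; exact Finset.mem_union_left _ hy⟩
      · exact ⟨i, hi, by rw [hrest i h]; exact hy⟩
    · exact ⟨0, ht, by rw [h0]; exact Finset.mem_union_right _ hy⟩

lemma biUnion_piece_congr {β : Type} {i : ℕ} (G F : ℕ → Finset β)
    (h : ∀ j, j < i → G j = F j) :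
    (Finset.range i).biUnion G = (Finset.range i).biUnion F :=
  Finset.biUnion_congr rfl (fun j hj => h j (Finset.mem_range.mp hj))

lemma tree_of_empty (S : PLS α) (hΛ : S.Λ = ∅) :
    ∃ (t : ℕ) (F : ℕ → PLS α), 1 ≤ t ∧ S.IsTreeOf t F ∧ ∀ i, i < t → (F i).IsQIMP := by
  refine ⟨1, fun _ => S, le_refl 1, ⟨?_, ?_, ?_⟩, ?_⟩
  · simp
  · simp
  · intro i hi1 hi2; omega
  · intro i hi ℓ hℓ
    rw [hΛ] at hℓ
    exact absurd hℓ (Finset.notMem_empty ℓ)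

lemma exists_tree_of_ump : ∀ (N : ℕ) (S : PLS α), S.Λ.card ≤ N → S.IsUMP →
    ∃ (t : ℕ) (F : ℕ → PLS α), 1 ≤ t ∧ S.IsTreeOf t F ∧ ∀ i, i < t → (F i).IsQIMP := by
  intro N
  induction N with
  | zero =>
    intro S hcard hUMP
    exact tree_of_empty S (Finset.card_eq_zero.mp (by omega))
  | succ N ih =>
    intro S hcard hUMP
    by_cases hΛ : S.Λ = ∅
    · exact tree_of_empty S hΛ
    -- a minimal nonempty subfamily with boundary of size at most one
    set Fam := S.Λ.powerset.filter
      (fun Γ => Γ.Nonempty ∧ (Γ.biUnion id ∩ ((S.Λ \ Γ).biUnion id)).card ≤ 1) with hFam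
    have hFamne : S.Λ ∈ Fam := by
      refine Finset.mem_filter.mpr ⟨Finset.mem_powerset.mpr (le_refl _),
        Finset.nonempty_iff_ne_empty.mpr hΛ, ?_⟩
      simp
    obtain ⟨Γ, hΓFam, hΓmin⟩ : ∃ Γ ∈ Fam, ∀ x ∈ Fam, ¬ x < Γ := by
      obtain ⟨Γ, h⟩ := Finset.exists_minimal (s := Fam) ⟨S.Λ, hFamne⟩
      exact ⟨Γ, h.prop, fun x hx => h.not_lt hx⟩
    obtain ⟨hΓpow, hΓne, hΓbd⟩ := Finset.mem_filter.mp hΓFam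
    have hΓΛ : Γ ⊆ S.Λ := Finset.mem_powerset.mp hΓpow
    have hmin' : ∀ Γ', Γ' ⊆ Γ → Γ'.Nonempty →
        (Γ'.biUnion id ∩ ((S.Λ \ Γ').biUnion id)).card ≤ 1 → Γ' = Γ := by
      intro Γ' h1 h2 h3
      by_contra hne
      exact hΓmin Γ'
        (Finset.mem_filter.mpr ⟨Finset.mem_powerset.mpr (h1.trans hΓΛ), h2, h3⟩)
        (lt_of_le_of_ne h1 hne)
    have hqimp := minimal_block_qimp hUMP hΓΛ hΓbd hmin'
    set B := Γ.biUnion id ∩ ((S.Λ \ Γ).biUnion id) with hB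
    set S₀ : PLS α := {
      J := (S.J \ Γ.biUnion id) ∪ B
      Λ := S.Λ \ Γ
      line_sub := by
        intro ℓ hℓ y hy
        rw [Finset.mem_sdiff] at hℓ
        by_cases hyΓ : y ∈ Γ.biUnion id
        · exact Finset.mem_union_right _ (Finset.mem_inter.mpr ⟨hyΓ,
            Finset.mem_biUnion.mpr ⟨ℓ, Finset.mem_sdiff.mpr hℓ, hy⟩⟩)
        · exact Finset.mem_union_left _ (Finset.mem_sdiff.mpr ⟨S.line_sub ℓ hℓ.1 hy, hyΓ⟩)
      line_card := fun ℓ hℓ => S.line_card ℓ (Finset.mem_sdiff.mp hℓ).1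
      line_inter := fun ℓ hℓ ℓ' hℓ' =>
        S.line_inter ℓ (Finset.mem_sdiff.mp hℓ).1 ℓ' (Finset.mem_sdiff.mp hℓ').1
    } with hS₀
    have hS₀Λ : S₀.Λ = S.Λ \ Γ := rfl
    have hS₀J : S₀.J = (S.J \ Γ.biUnion id) ∪ B := rfl
    have hcard₀ : S₀.Λ.card ≤ N := by
      have h1 : S.Λ \ Γ ⊂ S.Λ := Finset.sdiff_ssubset hΓΛ hΓne
      have := Finset.card_lt_card h1
      rw [hS₀Λ]
      omega
    have hUMP₀ : S₀.IsUMP := by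
      intro C C' hC hC' i j hi hj heq q q' h1 h2
      have lift : ∀ D : PLSCycle α, D.In S₀.Λ → D.In S.Λ := by
        intro D hD
        exact ⟨fun i hi => (Finset.mem_sdiff.mp (hD.1 i hi)).1,
          (Finset.mem_sdiff.mp hD.2).1⟩
      exact hUMP C C' (lift C hC) (lift C' hC') i j hi hj heq q q' h1 h2
    obtain ⟨t, F0, ht, htree₀, hq₀⟩ := ih S₀ hcard₀ hUMP₀
    have hptsΓJ : Γ.biUnion id ⊆ S.J := by
      intro y hy
      obtain ⟨ℓ, h1, h2⟩ := Finset.mem_biUnion.mp hy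
      exact S.line_sub ℓ (hΓΛ h1) h2
    have hBsub : B ⊆ Γ.biUnion id := Finset.inter_subset_left
    have hJdec : S.J = S₀.J ∪ Γ.biUnion id := by
      rw [hS₀J]
      ext y
      simp only [Finset.mem_union, Finset.mem_sdiff]
      constructor
      · intro hy
        by_cases hyΓ : y ∈ Γ.biUnion id
        · exact Or.inr hyΓ
        · exact Or.inl (Or.inl ⟨hy, hyΓ⟩)
      · rintro ((⟨h1, _⟩ | h1) | h1)
        · exact h1
        · exact hptsΓJ (hBsub h1)
        · exact hptsΓJ h1
    have hJcap : S₀.J ∩ Γ.biUnion id = B := by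
      rw [hS₀J]
      ext y
      simp only [Finset.mem_inter, Finset.mem_union, Finset.mem_sdiff]
      constructor
      · rintro ⟨h1 | h1, h2⟩
        · exact absurd h2 h1.2
        · exact h1
      · intro hy
        exact ⟨Or.inr hy, hBsub hy⟩
    have hΛdec : S.Λ = S₀.Λ ∪ Γ := by
      rw [hS₀Λ, Finset.sdiff_union_of_subset hΓΛ]
    have hF0J : ∀ i, i < t → (F0 i).J ⊆ S₀.J := by
      intro i hi
      rw [htree₀.1]
      exact Finset.subset_biUnion_of_mem (fun j => (F0 j).J) (Finset.mem_range.mpr hi)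
    have hF0Λ : ∀ i, i < t → (F0 i).Λ ⊆ S₀.Λ := by
      intro i hi
      rw [htree₀.2.1]
      exact Finset.subset_biUnion_of_mem (fun j => (F0 j).Λ) (Finset.mem_range.mpr hi)
    rcases Nat.lt_or_ge B.card 1 with hB0 | hB1
    · -- B = ∅ : merge the new piece into piece 0
      have hBe : B = ∅ := Finset.card_eq_zero.mp (by omega)
      have hcapset : S₀.J ∩ Γ.biUnion id = ∅ := by rw [hJcap, hBe]
      have hdisj : ∀ y, y ∈ S₀.J → y ∈ Γ.biUnion id → False := by
        intro y h1 h2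
        have : y ∈ S₀.J ∩ Γ.biUnion id := Finset.mem_inter.mpr ⟨h1, h2⟩
        rw [hcapset] at this
        exact absurd this (Finset.notMem_empty y)
      set Pm : PLS α := {
        J := (F0 0).J ∪ Γ.biUnion id
        Λ := (F0 0).Λ ∪ Γ
        line_sub := by
          intro ℓ hℓ
          rcases Finset.mem_union.mp hℓ with h | h
          · exact ((F0 0).line_sub ℓ h).trans Finset.subset_union_left
          · intro y hy
            exact Finset.mem_union_right _ (Finset.mem_biUnion.mpr ⟨ℓ, h, hy⟩)
        line_card := by
          intro ℓ hℓ
          rcases Finset.mem_union.mp hℓ with h | h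
          · exact S.line_card ℓ (Finset.mem_sdiff.mp (hF0Λ 0 ht h)).1
          · exact S.line_card ℓ (hΓΛ h)
        line_inter := by
          intro ℓ hℓ ℓ' hℓ'
          have hmem : ∀ ℓ'', ℓ'' ∈ (F0 0).Λ ∪ Γ → ℓ'' ∈ S.Λ := by
            intro ℓ'' h
            rcases Finset.mem_union.mp h with h | h
            · exact (Finset.mem_sdiff.mp (hF0Λ 0 ht h)).1
            · exact hΓΛ h
          exact S.line_inter ℓ (hmem ℓ hℓ) ℓ' (hmem ℓ' hℓ')
      } with hPm
      set F' : ℕ → PLS α := fun i => if i = 0 then Pm else F0 i with hF'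
      have hF'0 : F' 0 = Pm := by simp [hF']
      have hF'ne : ∀ j, j ≠ 0 → F' j = F0 j := by
        intro j h
        simp [hF', h]
      refine ⟨t, F', ht, ⟨?_, ?_, ?_⟩, ?_⟩
      · rw [biUnion_piece_zero ht (fun i => (F' i).J) (fun i => (F0 i).J) (Γ.biUnion id)
          (by simp only [hF'0, hPm]) (fun j hj => by simp only [hF'ne j hj]), ← htree₀.1, ← hJdec]
      · ext ℓ
        simp only [Finset.mem_biUnion, Finset.mem_range]
        constructor
        · intro hℓ
          by_cases hΓm : ℓ ∈ Γ
          · exact ⟨0, ht, by rw [hF'0]; exact Finset.mem_union_right _ hΓm⟩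
          · have h : ℓ ∈ S₀.Λ := Finset.mem_sdiff.mpr ⟨hℓ, hΓm⟩
            rw [htree₀.2.1] at h
            obtain ⟨i, hi, h2⟩ := Finset.mem_biUnion.mp h
            rw [Finset.mem_range] at hi
            by_cases h0 : i = 0
            · exact ⟨0, ht, by
                rw [hF'0]
                exact Finset.mem_union_left _ (by rw [← h0]; exact h2)⟩
            · exact ⟨i, hi, by rw [hF'ne i h0]; exact h2⟩
        · rintro ⟨i, hi, h2⟩
          by_cases h0 : i = 0
          · subst h0
            rw [hF'0] at h2
            rcases Finset.mem_union.mp h2 with h | h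
            · exact (Finset.mem_sdiff.mp (hF0Λ 0 ht h)).1
            · exact hΓΛ h
          · rw [hF'ne i h0] at h2
            exact (Finset.mem_sdiff.mp (hF0Λ i hi h2)).1
      · intro i h0 hi
        obtain ⟨x, hx⟩ := htree₀.2.2 i h0 hi
        refine ⟨x, ?_⟩
        rw [hF'ne i (by omega),
          biUnion_piece_zero h0 (fun j => (F' j).J) (fun j => (F0 j).J) (Γ.biUnion id)
            (by simp only [hF'0, hPm]) (fun j hj => by simp only [hF'ne j hj]),
          Finset.inter_union_distrib_left, hx]
        have h2 : (F0 i).J ∩ Γ.biUnion id = ∅ := by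
          rw [Finset.eq_empty_iff_forall_notMem]
          intro y hy
          rw [Finset.mem_inter] at hy
          exact hdisj y (hF0J i hi hy.1) hy.2
        rw [h2, Finset.union_empty]
      · intro i hi
        by_cases h : i = 0
        · subst h
          rw [hF'0]
          intro ℓ hℓ
          by_cases hℓ0 : ℓ ∈ (F0 0).Λ
          · obtain ⟨q, hq1, hq2⟩ := hq₀ 0 ht ℓ hℓ0
            refine ⟨q, hq1, ?_⟩
            intro ℓ' hℓ' hne hqℓ'
            rcases Finset.mem_union.mp (show ℓ' ∈ (F0 0).Λ ∪ Γ from hℓ') with h' | h'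
            · exact hq2 ℓ' h' hne hqℓ'
            · refine hdisj q ?_ (Finset.mem_biUnion.mpr ⟨ℓ', h', hqℓ'⟩)
              exact hF0J 0 ht ((F0 0).line_sub ℓ hℓ0 hq1)
          · have hℓΓ : ℓ ∈ Γ := by
              rcases Finset.mem_union.mp (show ℓ ∈ (F0 0).Λ ∪ Γ from hℓ) with h' | h'
              · exact absurd h' hℓ0
              · exact h'
            obtain ⟨q, hq1, hq2⟩ := hqimp ℓ hℓΓ
            refine ⟨q, hq1, ?_⟩
            intro ℓ' hℓ' hne hqℓ'
            rcases Finset.mem_union.mp (show ℓ' ∈ (F0 0).Λ ∪ Γ from hℓ') with h' | h'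
            · refine hdisj q ?_ (Finset.mem_biUnion.mpr ⟨ℓ, hℓΓ, hq1⟩)
              exact hF0J 0 ht ((F0 0).line_sub ℓ' h' hqℓ')
            · exact hq2 ℓ' h' hne hqℓ'
        · rw [hF'ne i h]
          exact hq₀ i hi
    · -- |B| = 1 : append the new piece at the end
      obtain ⟨x, hx⟩ := Finset.card_eq_one.mp (le_antisymm hΓbd hB1)
      set Pp : PLS α := {
        J := Γ.biUnion id
        Λ := Γ
        line_sub := fun ℓ h y hy => Finset.mem_biUnion.mpr ⟨ℓ, h, hy⟩
        line_card := fun ℓ h => S.line_card ℓ (hΓΛ h)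
        line_inter := fun ℓ h ℓ' h' => S.line_inter ℓ (hΓΛ h) ℓ' (hΓΛ h')
      } with hPp
      set F' : ℕ → PLS α := fun i => if i = t then Pp else F0 i with hF'
      have hF't : F' t = Pp := by simp [hF']
      have hF'ne : ∀ j, j ≠ t → F' j = F0 j := by
        intro j h
        simp [hF', h]
      refine ⟨t + 1, F', by omega, ⟨?_, ?_, ?_⟩, ?_⟩
      · rw [biUnion_piece_last t (fun i => (F' i).J) (fun i => (F0 i).J) (Γ.biUnion id)
          (by simp only [hF't, hPp]) (fun j hj => by simp only [hF'ne j hj]), ← htree₀.1, ← hJdec]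
      · ext ℓ
        simp only [Finset.mem_biUnion, Finset.mem_range]
        constructor
        · intro hℓ
          by_cases hΓm : ℓ ∈ Γ
          · exact ⟨t, by omega, by rw [hF't]; exact hΓm⟩
          · have h : ℓ ∈ S₀.Λ := Finset.mem_sdiff.mpr ⟨hℓ, hΓm⟩
            rw [htree₀.2.1] at h
            obtain ⟨i, hi, h2⟩ := Finset.mem_biUnion.mp h
            rw [Finset.mem_range] at hi
            exact ⟨i, by omega, by rw [hF'ne i (by omega)]; exact h2⟩
        · rintro ⟨i, hi, h2⟩
          by_cases h0 : i = t
          · subst h0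
            rw [hF't] at h2
            exact hΓΛ h2
          · rw [hF'ne i h0] at h2
            exact (Finset.mem_sdiff.mp (hF0Λ i (by omega) h2)).1
      · intro i h0 hi
        by_cases hit : i = t
        · subst hit
          refine ⟨x, ?_⟩
          rw [hF't,
            biUnion_piece_congr (fun j => (F' j).J) (fun j => (F0 j).J)
              (fun j hj => by simp only [hF'ne j (by omega)]), ← htree₀.1]
          show Γ.biUnion id ∩ S₀.J = {x}
          rw [Finset.inter_comm, hJcap, ← hx]
        · have hit' : i < t := by omega
          obtain ⟨y, hy⟩ := htree₀.2.2 i h0 hit'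
          refine ⟨y, ?_⟩
          rw [hF'ne i hit,
            biUnion_piece_congr (fun j => (F' j).J) (fun j => (F0 j).J)
              (fun j hj => by simp only [hF'ne j (by omega)]), hy]
      · intro i hi
        by_cases h : i = t
        · subst h
          rw [hF't]
          intro ℓ hℓ
          exact hqimp ℓ hℓ
        · rw [hF'ne i h]
          exact hq₀ i (by omega)

end Assemble

end PLSAux

theorem statement_2 {α : Type} (S : PLS α) :
    S.IsUMP ↔ ∃ (t : ℕ) (F : ℕ → PLS α), 1 ≤ t ∧ S.IsTreeOf t F ∧
      ∀ i, i < t → (F i).IsQIMP := by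
  constructor
  · intro hUMP
    exact PLSAux.exists_tree_of_ump S.Λ.card S le_rfl hUMP
  · rintro ⟨t, F, ht, htree, hq⟩
    exact PLSAux.isUMP_of_tree htree hq

end
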